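/- Let $G$ be a group admitting a bi-invariant mean (i.e., a linear functional $m : \ell^\infty(G) \to \mathbb{R}$ with $m(\chi_G)=1$, $m(\varphi)\ge 0$ whenever $\varphi \ge 0$, and $m$ invariant under both left and right translations), and let $H \le G$ be a subgroup of infinite index. Then for any pair of finite subsets $T, T' \subseteq G$ there exists $g \in G$ such that the images of $T\cdot g$ and $T'$ under the canonical projection $G \to H\backslash G$ are disjoint; equivalently, $T g \cap H T' = \emptyset$ when translated into cosets, i.e., $g \notin T^{-1} H T'$. -/

import Mathlib

/-- The space `ℓ∞(G)` of bounded real-valued functions on `G`, as a submodule of `G → ℝ`. -/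
def Linf (G : Type*) : Submodule ℝ (G → ℝ) where
  carrier := {f | ∃ C : ℝ, ∀ x, |f x| ≤ C}
  add_mem' := by
    rintro f g ⟨C, hC⟩ ⟨D, hD⟩
    exact ⟨C + D, fun x => by
      simpa using (abs_add_le (f x) (g x)).trans (add_le_add (hC x) (hD x))⟩
  zero_mem' := ⟨0, fun x => by simp⟩
  smul_mem' := by
    rintro c f ⟨C, hC⟩
    exact ⟨|c| * C, fun x => by
      simpa [abs_mul] using mul_le_mul_of_nonneg_left (hC x) (abs_nonneg c)⟩

open Classical in
/-- The characteristic function of a set, as an element of `ℓ∞`. -/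
noncomputable def chi {G : Type*} (A : Set G) : Linf G :=
  ⟨fun x => if x ∈ A then 1 else 0, ⟨1, fun x => by by_cases h : x ∈ A <;> simp [h]⟩⟩

/-- Left translation action on `ℓ∞(G)`: `(g • φ)(x) = φ(g⁻¹ x)`. -/
def lT {G : Type*} [Group G] (g : G) (φ : Linf G) : Linf G :=
  ⟨fun x => (φ : G → ℝ) (g⁻¹ * x), by obtain ⟨C, hC⟩ := φ.2; exact ⟨C, fun x => hC _⟩⟩

/-- Right translation action on `ℓ∞(G)`: `(φ • g)(x) = φ(x g)`. -/
def rT {G : Type*} [Group G] (g : G) (φ : Linf G) : Linf G :=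
  ⟨fun x => (φ : G → ℝ) (x * g), by obtain ⟨C, hC⟩ := φ.2; exact ⟨C, fun x => hC _⟩⟩

/-- A mean on `G`: a normalized positive linear functional on `ℓ∞(G)`. -/
structure Mean (G : Type*) where
  toFun : Linf G →ₗ[ℝ] ℝ
  normalized : toFun (chi Set.univ) = 1
  pos : ∀ φ : Linf G, (∀ x, 0 ≤ (φ : G → ℝ) x) → 0 ≤ toFun φ

/-- A mean is left invariant if it is invariant under left translations. -/
def Mean.LeftInvariant {G : Type*} [Group G] (m : Mean G) : Prop :=
  ∀ (g : G) (φ : Linf G), m.toFun (lT g φ) = m.toFun φ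

/-- A mean is right invariant if it is invariant under right translations. -/
def Mean.RightInvariant {G : Type*} [Group G] (m : Mean G) : Prop :=
  ∀ (g : G) (φ : Linf G), m.toFun (rT g φ) = m.toFun φ

/-- If `G` admits a bi-invariant mean and `H ≤ G` has infinite index
(the space of right cosets `H\G` is infinite), then for any pair of finite subsets
`T, T' ⊆ G` there is `g ∈ G` such that the images of `T·g` and `T'` in `H\G` are disjoint. -/
lemma Mean.mono {G : Type*} (m : Mean G) {φ ψ : Linf G}
    (h : ∀ x, (φ : G → ℝ) x ≤ (ψ : G → ℝ) x) : m.toFun φ ≤ m.toFun ψ := by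
  have h0 : 0 ≤ m.toFun (ψ - φ) := m.pos _ (fun x => by
    have : ((ψ - φ : Linf G) : G → ℝ) x = (ψ : G → ℝ) x - (φ : G → ℝ) x := by
      simp
    rw [this]; linarith [h x])
  have := map_sub m.toFun ψ φ
  linarith [h0, this]

lemma chiH_zero {G : Type*} [Group G] (m : Mean G) (hmr : m.RightInvariant)
    (H : Subgroup G) (hH : Infinite (Quotient (QuotientGroup.rightRel H))) :
    m.toFun (chi (H : Set G)) = 0 := by
  classical
  set c := m.toFun (chi (H : Set G)) with hc
  have hc0 : 0 ≤ c := m.pos _ (fun x => by simp only [chi]; split_ifs <;> norm_num)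
  have key : ∀ n : ℕ, (n : ℝ) * c ≤ 1 := by
    intro n
    set f := Infinite.natEmbedding (Quotient (QuotientGroup.rightRel H)) with hf
    set ψ : ℕ → Linf G := fun i =>
      chi {x | Quotient.mk (QuotientGroup.rightRel H) x = f i} with hψ
    have hmψ : ∀ i, m.toFun (ψ i) = c := by
      intro i
      have heq : ψ i = rT ((f i).out⁻¹) (chi (H : Set G)) := by
        apply Subtype.ext; funext x
        have hiff : (Quotient.mk (QuotientGroup.rightRel H) x = f i)
            ↔ x * (f i).out⁻¹ ∈ (H : Set G) := by
          conv_lhs => rw [← Quotient.out_eq (f i)]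
          rw [Quotient.eq, QuotientGroup.rightRel_apply]
          constructor
          · intro h; simpa using H.inv_mem h
          · intro h; simpa using H.inv_mem h
        simp only [ψ, chi, rT, Set.mem_setOf_eq]
        by_cases h : x * (f i).out⁻¹ ∈ (H : Set G)
        · rw [if_pos (hiff.mpr h), if_pos h]
        · rw [if_neg (fun hx => h (hiff.mp hx)), if_neg h]
      rw [heq, hmr]
    have hsum : m.toFun (∑ i ∈ Finset.range n, ψ i) = (n : ℝ) * c := by
      rw [map_sum]
      simp [hmψ, Finset.sum_const, mul_comm]
    have hle : m.toFun (∑ i ∈ Finset.range n, ψ i) ≤ m.toFun (chi (Set.univ : Set G)) := by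
      apply m.mono
      intro x
      have hcoe : ((∑ i ∈ Finset.range n, ψ i : Linf G) : G → ℝ) x
          = ∑ i ∈ Finset.range n, ((ψ i : G → ℝ) x) := by
        simp
      rw [hcoe]
      have hcard : ((Finset.range n).filter
          (fun i => Quotient.mk (QuotientGroup.rightRel H) x = f i)).card ≤ 1 := by
        apply Finset.card_le_one.2
        intro a ha b hb
        simp only [Finset.mem_filter] at ha hb
        exact f.injective (ha.2 ▸ hb.2.symm ▸ rfl)
      calc ∑ i ∈ Finset.range n, ((ψ i : G → ℝ) x)
          = ∑ i ∈ Finset.range n,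
            (if Quotient.mk (QuotientGroup.rightRel H) x = f i then (1:ℝ) else 0) := by
            apply Finset.sum_congr rfl; intro i _; simp [ψ, chi]
        _ = (((Finset.range n).filter
            (fun i => Quotient.mk (QuotientGroup.rightRel H) x = f i)).card : ℝ) := by
            rw [Finset.sum_boole]
        _ ≤ 1 := by exact_mod_cast hcard
        _ = ((chi (Set.univ : Set G) : Linf G) : G → ℝ) x := by simp [chi]
    rw [hsum, m.normalized] at hle
    exact hle
  by_contra hne
  have hcpos : 0 < c := lt_of_le_of_ne hc0 (Ne.symm hne)
  obtain ⟨n, hn⟩ := exists_nat_gt (1 / c)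
  have : 1 < (n : ℝ) * c := by
    rw [div_lt_iff₀ hcpos] at hn; linarith
  linarith [key n]

lemma chiS_zero {G : Type*} [Group G] (m : Mean G)
    (hml : m.LeftInvariant) (hmr : m.RightInvariant)
    (H : Subgroup G) (hH : Infinite (Quotient (QuotientGroup.rightRel H)))
    (t t' : G) :
    m.toFun (chi {x : G | t * x * t'⁻¹ ∈ H}) = 0 := by
  have heq : chi {x : G | t * x * t'⁻¹ ∈ H}
      = lT t⁻¹ (rT t'⁻¹ (chi (H : Set G))) := by
    apply Subtype.ext; funext x
    simp only [chi, lT, rT, Set.mem_setOf_eq, SetLike.mem_coe, inv_inv]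
    split_ifs <;> tauto
  rw [heq, hml, hmr, chiH_zero m hmr H hH]

set_option maxHeartbeats 1000000 in
theorem separation_lemma {G : Type*} [Group G] (m : Mean G)
    (hml : m.LeftInvariant) (hmr : m.RightInvariant)
    (H : Subgroup G) (hH : Infinite (Quotient (QuotientGroup.rightRel H)))
    (T T' : Set G) (hT : T.Finite) (hT' : T'.Finite) :
    ∃ g : G, ∀ t ∈ T, ∀ t' ∈ T',
      (Quotient.mk (QuotientGroup.rightRel H) (t * g) :
        Quotient (QuotientGroup.rightRel H)) ≠
      Quotient.mk (QuotientGroup.rightRel H) t' := by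
  classical
  by_contra hcon
  push_neg at hcon
  set F : Linf G := ∑ p ∈ hT.toFinset ×ˢ hT'.toFinset,
    chi {x : G | p.1 * x * p.2⁻¹ ∈ H} with hF
  have hFzero : m.toFun F = 0 := by
    rw [hF, map_sum]
    apply Finset.sum_eq_zero
    intro p _
    exact chiS_zero m hml hmr H hH p.1 p.2
  have hone : m.toFun (chi (Set.univ : Set G)) ≤ m.toFun F := by
    apply m.mono
    intro g
    obtain ⟨t, ht, t', ht', heq⟩ := hcon g
    have hmem : t * g * t'⁻¹ ∈ H := by
      rw [Quotient.eq, QuotientGroup.rightRel_apply] at heq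
      simpa using H.inv_mem heq
    have h1 : (1 : ℝ) ≤ ((F : Linf G) : G → ℝ) g := by
      have hcoe : ((F : Linf G) : G → ℝ) g = ∑ p ∈ hT.toFinset ×ˢ hT'.toFinset,
          ((chi {x : G | p.1 * x * p.2⁻¹ ∈ H} : Linf G) : G → ℝ) g := by
        simp [hF]
      rw [hcoe]
      have hval : ((chi {x : G | t * x * t'⁻¹ ∈ H} : Linf G) : G → ℝ) g = 1 := by
        simp only [chi, Set.mem_setOf_eq]
        rw [if_pos hmem]
      calc (1 : ℝ) = ((chi {x : G | t * x * t'⁻¹ ∈ H} : Linf G) : G → ℝ) g := hval.symm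
        _ ≤ _ := Finset.single_le_sum
            (f := fun p : G × G => ((chi {x : G | p.1 * x * p.2⁻¹ ∈ H} : Linf G) : G → ℝ) g)
            (a := (t, t'))
            (fun p _ => by simp only [chi]; split_ifs <;> norm_num)
            (Finset.mem_product.2 ⟨hT.mem_toFinset.2 ht, hT'.mem_toFinset.2 ht'⟩)
    calc ((chi (Set.univ : Set G) : Linf G) : G → ℝ) g = 1 := by simp [chi]
      _ ≤ _ := h1
  rw [m.normalized, hFzero] at hone
  linarith
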